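/- Let I be an ideal of K[x_1,...,x_n] generated by polynomials of degree at most d_1, and suppose X ⊆ K^n is defined by parameters u_1,...,u_{n−m} with deg u_i ≤ d_2. If D is any derivation from the generating set of the logarithmic derivation module (consisting of u_i ∂'_{u_j}, x_j ∂_{x_j} for exceptional coordinates, and ∂'_{u_j} otherwise, where ∂'_{u_j} are obtained from ∂_{x_i} via the adjugate of the Jacobian matrix (∂u_j/∂x_i)), then the ideal D(I) + I is generated by elements of degree at most d_1 + n(d_2 − 1). -/

import Mathlib

/-!
STATEMENT 6: if `I ⊆ K[x_1,...,x_n]` is generated by polynomials of degree `≤ d₁`, and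
`X` is defined by parameters `u_1, ..., u_{n−m}` of degree `≤ d₂`, then for any derivation `D`
from the generating set of the logarithmic derivation module (the `u_i ∂'_{u_j}` with
`i, j ≤ n − m`, the `x_j ∂_{x_j}` for exceptional coordinates `j`, and the `∂'_{u_j}`
otherwise, where `(∂'_{u_j})_j = adj((∂u_j/∂x_i)) · (∂_{x_i})_i`), the ideal `D(I) + I` is
generated by elements of degree at most `d₁ + n(d₂ − 1)`.
-/

open MvPolynomial

/-- The Jacobian matrix `(∂u_j/∂x_i)_{ij}`. -/
noncomputable def jacMat {K : Type*} [Field K] {n : ℕ} (u : Fin n → MvPolynomial (Fin n) K) :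
    Matrix (Fin n) (Fin n) (MvPolynomial (Fin n) K) :=
  fun i j => pderiv i (u j)

/-- The derivation `∂'_{u_j}`, the `j`-th entry of `adj((∂u_j/∂x_i)) · (∂_{x_i})_i`. -/
noncomputable def dPrime {K : Type*} [Field K] {n : ℕ} (u : Fin n → MvPolynomial (Fin n) K)
    (j : Fin n) (g : MvPolynomial (Fin n) K) : MvPolynomial (Fin n) K :=
  ∑ i, (jacMat u).adjugate j i * pderiv i g

section Aux

open MvPolynomial

variable {K : Type*} [CommRing K] {n : ℕ}

private lemma sum_sub_single_le (i : Fin n) (v : Fin n →₀ ℕ) (hv : v i ≠ 0) :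
    ((v - Finsupp.single i 1).sum fun _ e => e) ≤ (v.sum fun _ e => e) - 1 := by
  classical
  rw [Finsupp.sum_fintype _ _ (fun _ => rfl), Finsupp.sum_fintype _ _ (fun _ => rfl)]
  rw [← Finset.add_sum_erase _ _ (Finset.mem_univ i),
    ← Finset.add_sum_erase _ (⇑v) (Finset.mem_univ i)]
  have h1 : ∀ j ∈ Finset.univ.erase i, ((v - Finsupp.single i 1 : Fin n →₀ ℕ)) j = v j := by
    intro j hj
    rw [Finsupp.tsub_apply, Finsupp.single_apply,
      if_neg (fun h => (Finset.mem_erase.mp hj).1 h.symm), Nat.sub_zero]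
  rw [Finset.sum_congr rfl h1]
  have h2 : ((v - Finsupp.single i 1 : Fin n →₀ ℕ)) i = v i - 1 := by
    rw [Finsupp.tsub_apply, Finsupp.single_apply, if_pos rfl]
  have h3 : (Finset.univ.erase i).sum ⇑v = ∑ x ∈ Finset.univ.erase i, v x := rfl
  omega

private lemma my_totalDegree_pderiv_le (i : Fin n) (f : MvPolynomial (Fin n) K) :
    (pderiv i f).totalDegree ≤ f.totalDegree - 1 := by
  conv_lhs => rw [f.as_sum]
  rw [map_sum]
  refine totalDegree_finsetSum_le fun v hv => ?_
  rw [pderiv_monomial]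
  by_cases h : v i = 0
  · simp [h]
  · refine (totalDegree_monomial_le _ _).trans ?_
    exact (sum_sub_single_le i v h).trans (Nat.sub_le_sub_right (le_totalDegree hv) 1)

private lemma my_pderiv_eq_zero (i : Fin n) {f : MvPolynomial (Fin n) K}
    (hf : f.totalDegree = 0) : pderiv i f = 0 := by
  conv_lhs => rw [f.as_sum]
  rw [map_sum]
  refine Finset.sum_eq_zero fun v hv => ?_
  rw [pderiv_monomial, (totalDegree_eq_zero_iff _ f).mp hf v hv i, Nat.cast_zero, mul_zero,
    map_zero]

private lemma my_totalDegree_det_le (M : Matrix (Fin n) (Fin n) (MvPolynomial (Fin n) K))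
    (b : Fin n → ℕ) (hb : ∀ i j, (M i j).totalDegree ≤ b i) :
    M.det.totalDegree ≤ ∑ i, b i := by
  rw [Matrix.det_apply]
  refine totalDegree_finsetSum_le fun σ _ => ?_
  have h1 : (Equiv.Perm.sign σ • ∏ i, M (σ i) i : MvPolynomial (Fin n) K)
      = C ((Equiv.Perm.sign σ : ℤ) : K) * ∏ i, M (σ i) i := by
    rw [Units.smul_def, zsmul_eq_mul, map_intCast (C : K →+* MvPolynomial (Fin n) K)]
  rw [h1]
  refine (totalDegree_mul _ _).trans ?_
  rw [totalDegree_C, zero_add]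
  refine (totalDegree_finset_prod _ _).trans ?_
  calc ∑ i, (M (σ i) i).totalDegree ≤ ∑ i, b (σ i) :=
        Finset.sum_le_sum fun i _ => hb (σ i) i
    _ = ∑ i, b i := Equiv.sum_comp σ b

private lemma my_totalDegree_adjugate_le (M : Matrix (Fin n) (Fin n) (MvPolynomial (Fin n) K))
    (d : ℕ) (hM : ∀ i j, (M i j).totalDegree ≤ d) (i j : Fin n) :
    (M.adjugate i j).totalDegree ≤ (n - 1) * d := by
  classical
  rw [Matrix.adjugate_apply]
  have h := my_totalDegree_det_le (M.updateRow j (Pi.single i 1))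
    (fun k => if k = j then 0 else d) (fun k l => by
      show (M.updateRow j (Pi.single i 1) k l).totalDegree ≤ (if k = j then 0 else d)
      by_cases hk : k = j
      · subst hk
        rw [Matrix.updateRow_self, if_pos rfl]
        by_cases hl : l = i
        · subst hl; simp [Pi.single_apply]
        · simp [Pi.single_apply, hl]
      · rw [Matrix.updateRow_ne hk, if_neg hk]; exact hM k l)
  refine h.trans (le_of_eq ?_)
  rw [← Finset.add_sum_erase _ _ (Finset.mem_univ j), if_pos rfl, zero_add]
  rw [Finset.sum_congr rfl (fun k hk => if_neg (Finset.mem_erase.mp hk).1),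
    Finset.sum_const, Finset.card_erase_of_mem (Finset.mem_univ j), Finset.card_univ,
    Fintype.card_fin, smul_eq_mul]

end Aux

section Aux2

open MvPolynomial

variable {K : Type*} [Field K] {n : ℕ}

private lemma my_totalDegree_dPrime_le (u : Fin n → MvPolynomial (Fin n) K) {d₂ : ℕ}
    (hu : ∀ i, (u i).totalDegree ≤ d₂) (j : Fin n) (g : MvPolynomial (Fin n) K) :
    (dPrime u j g).totalDegree ≤ (n - 1) * (d₂ - 1) + (g.totalDegree - 1) := by
  refine totalDegree_finsetSum_le fun i _ => ?_
  refine (totalDegree_mul _ _).trans (add_le_add ?_ (my_totalDegree_pderiv_le i g))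
  exact my_totalDegree_adjugate_le (jacMat u) (d₂ - 1)
    (fun a b => (my_totalDegree_pderiv_le a (u b)).trans (Nat.sub_le_sub_right (hu b) 1)) j i

private lemma my_dPrime_zero (u : Fin n → MvPolynomial (Fin n) K) (j : Fin n)
    {g : MvPolynomial (Fin n) K} (hg : g.totalDegree = 0) : dPrime u j g = 0 := by
  unfold dPrime
  refine Finset.sum_eq_zero fun i _ => ?_
  rw [my_pderiv_eq_zero i hg, mul_zero]

end Aux2

theorem log_derivative_ideal_degree_bound {K : Type*} [Field K] [CharZero K]
    {n m d₁ d₂ : ℕ} (hm : m ≤ n)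
    (u : Fin n → MvPolynomial (Fin n) K) (hu : ∀ i, (u i).totalDegree ≤ d₂)
    (Exc : Set (Fin n)) (hExc : ∀ j ∈ Exc, u j = X j)
    (G : Set (MvPolynomial (Fin n) K)) (hG : ∀ g ∈ G, g.totalDegree ≤ d₁)
    (D : MvPolynomial (Fin n) K → MvPolynomial (Fin n) K)
    (hD : (∃ i j : Fin n, (i : ℕ) < n - m ∧ (j : ℕ) < n - m ∧
            D = fun g => u i * dPrime u j g)
        ∨ (∃ j ∈ Exc, D = fun g => X j * pderiv j g)
        ∨ (∃ j : Fin n, n - m ≤ (j : ℕ) ∧ j ∉ Exc ∧ D = fun g => dPrime u j g)) :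
    ∃ S : Set (MvPolynomial (Fin n) K),
      (∀ h ∈ S, h.totalDegree ≤ d₁ + n * (d₂ - 1)) ∧
      Ideal.span S = Ideal.span (D '' G ∪ G) := by

  refine ⟨D '' G ∪ G, ?_, rfl⟩
  rintro h (⟨g, hgG, rfl⟩ | hh)
  · have hg := hG g hgG
    by_cases hg0 : g.totalDegree = 0
    · have hDg : D g = 0 := by
        rcases hD with ⟨i, j, _, _, rfl⟩ | ⟨j, _, rfl⟩ | ⟨j, _, _, rfl⟩
        · simp [my_dPrime_zero u j hg0]
        · simp [my_pderiv_eq_zero j hg0]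
        · simp [my_dPrime_zero u j hg0]
      rw [hDg, totalDegree_zero]
      exact Nat.zero_le _
    · have hd₁ : 1 ≤ d₁ := by omega
      have hdp : ∀ j, (dPrime u j g).totalDegree ≤ (n - 1) * (d₂ - 1) + (d₁ - 1) :=
        fun j => (my_totalDegree_dPrime_le u hu j g).trans
          (Nat.add_le_add_left (Nat.sub_le_sub_right hg 1) _)
      rcases hD with ⟨i, j, _, _, rfl⟩ | ⟨j, _, rfl⟩ | ⟨j, _, _, rfl⟩
      · have hn : 1 ≤ n := j.pos
        have key : (n - 1) * (d₂ - 1) + (d₂ - 1) ≤ n * (d₂ - 1) := by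
          have ha : (n - 1) * (d₂ - 1) = n * (d₂ - 1) - (d₂ - 1) := Nat.sub_one_mul n (d₂ - 1)
          have hb : (d₂ - 1) ≤ n * (d₂ - 1) := Nat.le_mul_of_pos_left _ hn
          omega
        refine (totalDegree_mul _ _).trans ?_
        have := add_le_add (hu i) (hdp j)
        refine this.trans ?_
        omega
      · have hn : 1 ≤ n := j.pos
        refine (totalDegree_mul _ _).trans ?_
        have h1 : (MvPolynomial.X j : MvPolynomial (Fin n) K).totalDegree = 1 :=
          totalDegree_X j
        have h2 : (pderiv j g).totalDegree ≤ d₁ - 1 :=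
          (my_totalDegree_pderiv_le j g).trans (Nat.sub_le_sub_right hg 1)
        omega
      · have hn : 1 ≤ n := j.pos
        have key : (n - 1) * (d₂ - 1) ≤ n * (d₂ - 1) :=
          Nat.mul_le_mul_right _ (Nat.sub_le n 1)
        refine (hdp j).trans ?_
        omega
  · exact (hG h hh).trans (Nat.le_add_right _ _)
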